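/- Let p be a prime, let W be an l × n matrix over Z_p, and let I ⊆ {1,…,l} be a set of row indices such that e₁ = (1,0,…,0) does not lie in the Z_p-span of the rows {W_i : i ∈ I}. Then for every vector v ∈ Z_p^n and every s′ ∈ Z_p there exists a vector v′ ∈ Z_p^n with first coordinate v′₁ = s′ and (W·v′)_i = (W·v)_i for every i ∈ I. In other words, the shares held by an unauthorized set of attributes are consistent with every possible value of the secret. -/

import Mathlib

/-- Privacy of an LSSS: if `e₁` is not in the span of the rows `{W i : i ∈ I}`,
then for every vector `v` and every secret `s'` there is a vector `v'` with
first coordinate `s'` producing exactly the same shares on `I`.  Thus the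
shares held by an unauthorized set are consistent with every possible secret. -/
theorem lsss_unauthorized_consistent {p l n : ℕ} [Fact p.Prime] [NeZero n]
    (W : Matrix (Fin l) (Fin n) (ZMod p)) (I : Finset (Fin l))
    (hI : (Pi.single 0 1 : Fin n → ZMod p) ∉
      Submodule.span (ZMod p) {r : Fin n → ZMod p | ∃ i ∈ I, r = W i}) :
    ∀ (v : Fin n → ZMod p) (s' : ZMod p),
      ∃ v' : Fin n → ZMod p, v' 0 = s' ∧ ∀ i ∈ I, W.mulVec v' i = W.mulVec v i := by
  intro v s'
  obtain ⟨f, hf0, hfmap⟩ :=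
    (Submodule.span (ZMod p) {r : Fin n → ZMod p | ∃ i ∈ I, r = W i}
      ).exists_dual_map_eq_bot_of_notMem hI inferInstance
  have hrow : ∀ i ∈ I, f (W i) = 0 := by
    intro i hi
    have : f (W i) ∈ (Submodule.span (ZMod p)
        {r : Fin n → ZMod p | ∃ i ∈ I, r = W i}).map f :=
      Submodule.mem_map_of_mem (Submodule.subset_span ⟨i, hi, rfl⟩)
    rw [hfmap] at this
    simpa using this
  set u : Fin n → ZMod p := fun j => f (Pi.single j 1) with hu
  have hfx : ∀ x : Fin n → ZMod p, f x = ∑ j, x j * u j := by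
    intro x
    have hx : x = ∑ j, x j • (Pi.single j 1 : Fin n → ZMod p) := by
      ext j; simp [Pi.single_apply]
    conv_lhs => rw [hx]
    rw [map_sum]
    simp [hu, mul_comm]
  have hu0 : u 0 ≠ 0 := by
    have : f (Pi.single 0 1) = u 0 := rfl
    rwa [this] at hf0
  refine ⟨v + ((s' - v 0) * (u 0)⁻¹) • u, ?_, ?_⟩
  · rw [Pi.add_apply, Pi.smul_apply, smul_eq_mul, mul_assoc, inv_mul_cancel₀ hu0, mul_one]; ring
  · intro i hi
    have hdot : ∑ j, W i j * u j = 0 := by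
      rw [← hfx]; exact hrow i hi
    have : W.mulVec (((s' - v 0) * (u 0)⁻¹) • u) i = 0 := by
      simp only [Matrix.mulVec, dotProduct, Pi.smul_apply, smul_eq_mul]
      calc ∑ j, W i j * ((s' - v 0) * (u 0)⁻¹ * u j)
          = (s' - v 0) * (u 0)⁻¹ * ∑ j, W i j * u j := by
            rw [Finset.mul_sum]; congr 1; ext j; ring
        _ = 0 := by rw [hdot, mul_zero]
    rw [Matrix.mulVec_add, Pi.add_apply, this, add_zero]
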